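/- Let μ be a probability measure on the unit circle S¹ with arclength distance d. Suppose there exists a point p̂ ∈ S¹ such that μ({p ∈ S¹ : d(p,p̂) ≤ π/2}) = 1 and μ({p ∈ S¹ : d(p,p̂) < π/2}) > 0 (the support of μ is contained in a closed hemisphere, with positive mass in the open hemisphere). Then μ admits a well-defined Fréchet mean, i.e. the Fréchet functional F_μ has a unique global minimizer, and this minimizer lies in {p ∈ S¹ : d(p,p̂) < π/2}. -/

import Mathlib

open MeasureTheory Real Set Filter

noncomputable section

/-- The unit circle `S¹` in `ℝ² ≃ ℂ`. -/
abbrev S1 := {x : ℂ // ‖x‖ = 1}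

/-- The arclength distance on `S¹`. -/
def dS1 (x p : S1) : ℝ := 2 * Real.arcsin (‖(x : ℂ) - (p : ℂ)‖ / 2)

/-- The Fréchet functional of a measure `μ` on `S¹`. -/
def frechet (μ : Measure S1) (p : S1) : ℝ := (1/2) * ∫ x, (dS1 x p)^2 ∂μ

/-- The normal coordinate chart centered at `p`: `θ ↦ R_θ p`. -/
def chart (p : S1) (θ : ℝ) : S1 :=
  ⟨Complex.exp (θ * Complex.I) * (p : ℂ), by
    rw [norm_mul, Complex.norm_exp_ofReal_mul_I, p.2, mul_one]⟩

/-- The inverse chart, with values in `[-π, π)`. -/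
def invChart (p₀ : S1) (p : S1) : ℝ :=
  if Complex.arg ((p : ℂ) / (p₀ : ℂ)) = π then -π else Complex.arg ((p : ℂ) / (p₀ : ℂ))

/-- The image measure `μ_{p₀}` of `μ` in the normal chart centered at `p₀`. -/
def chartMeasure (μ : Measure S1) (p₀ : S1) : Measure ℝ := Measure.map (invChart p₀) μ

/-- `m(μ_{p₀})`, the Euclidean mean of the image measure in the chart centered at `p₀`. -/
def mMean (μ : Measure S1) (p₀ : S1) : ℝ := ∫ t, t ∂(chartMeasure μ p₀)

/-- The antipodal point (cut locus) of `p`. -/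
def antipode (p : S1) : S1 := ⟨-(p : ℂ), by rw [norm_neg]; exact p.2⟩

/-- The (left-continuous extension of the) derivative of `θ ↦ F_μ(e_{p₀}(θ))`. -/
def extDerivS1 (μ : Measure S1) (p₀ : S1) (θ : ℝ) : ℝ :=
  if 0 ≤ θ then θ - 2*π*(chartMeasure μ p₀ (Ico (-π) (-π+θ))).toReal - mMean μ p₀
  else θ + 2*π*(chartMeasure μ p₀ (Ico (π+θ) π)).toReal - mMean μ p₀

def basePt : S1 := ⟨1, by norm_num⟩

/-- The (unnormalized) arclength measure on `S¹`, of total mass `2π`. -/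
def arcMeasure : Measure S1 := Measure.map (chart basePt) (volume.restrict (Ico (-π) π))

/-- Property `P(p, α, φ)` for a density `f` on `S¹`. -/
def propP (f : S1 → ℝ) (p : S1) (α φ : ℝ) : Prop :=
  ∀ θ ∈ Ico (-π) π, φ ≤ |θ| → f (chart p θ) ≤ (1 - α)/(2*π)

lemma S1.coe_ne_zero (p : S1) : (p : ℂ) ≠ 0 := by
  intro h; have := p.2; rw [h] at this; simp at this

lemma chart_coe (p : S1) (θ : ℝ) : (chart p θ : ℂ) = Complex.exp (θ * Complex.I) * p := rfl

lemma chart_zero (p : S1) : chart p 0 = p := by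
  apply Subtype.ext; simp [chart_coe]

lemma chart_add_two_pi (p : S1) (a : ℝ) : chart p (a + 2*π) = chart p a := by
  apply Subtype.ext
  simp only [chart_coe]
  have : ((a + 2*π : ℝ) : ℂ) * Complex.I = a * Complex.I + 2*π*Complex.I := by push_cast; ring
  rw [this, Complex.exp_add, Complex.exp_two_pi_mul_I, mul_one]

lemma norm_exp_mul_I_sub_one (t : ℝ) : ‖Complex.exp (t * Complex.I) - 1‖ = 2 * |Real.sin (t/2)| := by
  have hsq : ‖Complex.exp (t * Complex.I) - 1‖^2 = (2 * |Real.sin (t/2)|)^2 := by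
    rw [Complex.sq_norm, Complex.normSq_apply]
    simp only [Complex.sub_re, Complex.sub_im, Complex.exp_ofReal_mul_I_re,
      Complex.exp_ofReal_mul_I_im, Complex.one_re, Complex.one_im]
    have h1 : Real.sin (t/2)^2 = (1 - Real.cos t)/2 := by
      have := Real.abs_sin_half t
      have h2 : Real.sin (t/2)^2 = |Real.sin (t/2)|^2 := (sq_abs _).symm
      rw [h2, this, Real.sq_sqrt]
      nlinarith [Real.cos_le_one t]
    have h3 : Real.sin t ^2 + Real.cos t ^2 = 1 := Real.sin_sq_add_cos_sq t
    rw [mul_pow, sq_abs]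
    nlinarith
  have h4 : ‖Complex.exp (t * Complex.I) - 1‖ = Real.sqrt (‖Complex.exp (t * Complex.I) - 1‖^2) :=
    (Real.sqrt_sq (norm_nonneg _)).symm
  rw [h4, hsq, Real.sqrt_sq (by positivity)]

lemma dS1_chart (p : S1) (a b : ℝ) (h : |a - b| ≤ π) :
    dS1 (chart p a) (chart p b) = |a - b| := by
  have hnorm : ‖(chart p a : ℂ) - (chart p b : ℂ)‖ = 2 * |Real.sin ((a-b)/2)| := by
    have : (chart p a : ℂ) - (chart p b : ℂ)
        = (Complex.exp (((a-b):ℝ) * Complex.I) - 1) * (Complex.exp ((b:ℝ) * Complex.I) * p) := by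
      simp only [chart_coe]
      rw [sub_mul, one_mul, ← mul_assoc, ← Complex.exp_add]
      push_cast; ring_nf
    rw [this, norm_mul, norm_mul, Complex.norm_exp_ofReal_mul_I, p.2, mul_one, mul_one,
      norm_exp_mul_I_sub_one]
  unfold dS1
  rw [hnorm]
  have habs : |Real.sin ((a-b)/2)| = Real.sin (|a-b|/2) := by
    rcases abs_cases (a-b) with ⟨h1, h2⟩ | ⟨h1, h2⟩
    · rw [h1, abs_of_nonneg (Real.sin_nonneg_of_nonneg_of_le_pi (by linarith) (by linarith [h]))]
    · rw [h1]
      rw [abs_of_nonpos]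
      · rw [← Real.sin_neg]; ring_nf
      · have : Real.sin (-((a-b)/2)) ≥ 0 := Real.sin_nonneg_of_nonneg_of_le_pi (by linarith) (by
          have := h; rw [h1] at this; linarith)
        simpa [Real.sin_neg] using this
  rw [show 2 * |Real.sin ((a - b) / 2)| / 2 = |Real.sin ((a-b)/2)| by ring, habs,
    Real.arcsin_sin (by linarith [abs_nonneg (a-b)]) (by linarith)]
  ring

lemma invChart_mem_Ico (p₀ x : S1) : invChart p₀ x ∈ Ico (-π) π := by
  unfold invChart
  split_ifs with h
  · exact ⟨le_refl _, by linarith [Real.pi_pos]⟩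
  · constructor
    · linarith [Complex.neg_pi_lt_arg ((x : ℂ) / (p₀ : ℂ))]
    · exact lt_of_le_of_ne (Complex.arg_le_pi _) h

lemma chart_invChart (p₀ x : S1) : chart p₀ (invChart p₀ x) = x := by
  apply Subtype.ext
  rw [chart_coe]
  have hz : (x : ℂ) / (p₀ : ℂ) ≠ 0 := div_ne_zero (S1.coe_ne_zero x) (S1.coe_ne_zero p₀)
  have habs : ((‖(x : ℂ) / (p₀ : ℂ)‖ : ℝ) : ℂ) = 1 := by
    rw [norm_div]
    simp [x.2, p₀.2]
  have key : Complex.exp ((Complex.arg ((x : ℂ) / (p₀ : ℂ)) : ℝ) * Complex.I) = (x : ℂ) / (p₀ : ℂ) := by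
    have := Complex.norm_mul_exp_arg_mul_I ((x : ℂ) / (p₀ : ℂ))
    rwa [habs, one_mul] at this
  unfold invChart
  split_ifs with h
  · rw [show ((-π : ℝ) : ℂ) * Complex.I = -(π * Complex.I) by push_cast; ring, Complex.exp_neg,
      Complex.exp_pi_mul_I]
    rw [h] at key
    rw [Complex.exp_pi_mul_I] at key
    rw [inv_neg, inv_one, key, div_mul_cancel₀ _ (S1.coe_ne_zero p₀)]
  · rw [key, div_mul_cancel₀ _ (S1.coe_ne_zero p₀)]


lemma dS1_eq_abs_invChart (p₀ x : S1) : dS1 x p₀ = |invChart p₀ x| := by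
  have h := invChart_mem_Ico p₀ x
  have : dS1 x p₀ = dS1 (chart p₀ (invChart p₀ x)) (chart p₀ 0) := by
    rw [chart_invChart, chart_zero]
  rw [this, dS1_chart p₀ _ 0 (by rw [sub_zero]; rw [abs_le]; exact ⟨h.1, h.2.le⟩), sub_zero]

lemma measurable_invChart (p₀ : S1) : Measurable (invChart p₀) := by
  have harg : Measurable (fun x : S1 => Complex.arg ((x : ℂ) / (p₀ : ℂ))) :=
    Complex.measurable_arg.comp ((measurable_subtype_coe).div_const _)
  unfold invChart
  exact Measurable.ite (harg (measurableSet_singleton π)) measurable_const harg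

lemma sq_dS1_of_abs_le (p : S1) (t θ : ℝ) (h : |t - θ| ≤ π) :
    (dS1 (chart p t) (chart p θ))^2 = (t - θ)^2 := by
  rw [dS1_chart p t θ h, sq_abs]

/-- Case `θ ∈ (π/2, π)`: squared distance in the chart. -/
lemma sq_dS1_right (p : S1) (t θ : ℝ) (ht : |t| ≤ π/2) (hθ1 : π/2 < θ) (hθ2 : θ < π) :
    (dS1 (chart p t) (chart p θ))^2 = (t - θ)^2 - 4*π*max (θ - π - t) 0 := by
  have hpi := Real.pi_pos
  rw [abs_le] at ht
  rcases le_or_gt (θ - π) t with hc | hc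
  · rw [max_eq_right (by linarith), sq_dS1_of_abs_le p t θ (abs_le.2 ⟨by linarith, by linarith⟩)]
    ring
  · have h1 : chart p t = chart p (t + 2*π) := (chart_add_two_pi p t).symm
    rw [h1, sq_dS1_of_abs_le p (t + 2*π) θ (abs_le.2 ⟨by linarith, by linarith⟩),
      max_eq_left (by linarith)]
    ring

/-- Case `θ ∈ [-π, -π/2)`: squared distance in the chart. -/
lemma sq_dS1_left (p : S1) (t θ : ℝ) (ht : |t| ≤ π/2) (hθ1 : -π ≤ θ) (hθ2 : θ < -π/2) :
    (dS1 (chart p t) (chart p θ))^2 = (t - θ)^2 - 4*π*max (t - (θ + π)) 0 := by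
  have hpi := Real.pi_pos
  rw [abs_le] at ht
  rcases le_or_gt t (θ + π) with hc | hc
  · rw [max_eq_right (by linarith), sq_dS1_of_abs_le p t θ (abs_le.2 ⟨by linarith, by linarith⟩)]
    ring
  · have h1 : chart p θ = chart p (θ + 2*π) := (chart_add_two_pi p θ).symm
    rw [h1, sq_dS1_of_abs_le p t (θ + 2*π) (abs_le.2 ⟨by linarith, by linarith⟩),
      max_eq_left (by linarith)]
    ring

/-- nonnegativity of the comparison integrand, right case. -/
lemma Pright_nonneg (θ t : ℝ) (hθ1 : π/2 < θ) (hθ2 : θ ≤ π) (ht : |t| ≤ π/2) :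
    0 ≤ 2*(θ - π/2)*(π/2 - t) - 2*π*max (θ - π - t) 0 := by
  have hpi := Real.pi_pos
  rw [abs_le] at ht
  rcases le_or_gt (θ - π - t) 0 with hc | hc
  · rw [max_eq_right hc]; nlinarith
  · rw [max_eq_left hc.le]; nlinarith

lemma Pright_pos (θ t : ℝ) (hθ1 : π/2 < θ) (hθ2 : θ ≤ π) (ht : |t| < π/2) :
    0 < 2*(θ - π/2)*(π/2 - t) - 2*π*max (θ - π - t) 0 := by
  have hpi := Real.pi_pos
  rw [abs_lt] at ht
  rcases le_or_gt (θ - π - t) 0 with hc | hc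
  · rw [max_eq_right hc]; nlinarith
  · rw [max_eq_left hc.le]; nlinarith

lemma Pleft_nonneg (θ t : ℝ) (hθ1 : -π ≤ θ) (hθ2 : θ < -π/2) (ht : |t| ≤ π/2) :
    0 ≤ 2*(-π/2 - θ)*(π/2 + t) - 2*π*max (t - (θ + π)) 0 := by
  have hpi := Real.pi_pos
  rw [abs_le] at ht
  rcases le_or_gt (t - (θ + π)) 0 with hc | hc
  · rw [max_eq_right hc]; nlinarith
  · rw [max_eq_left hc.le]; nlinarith

lemma Pleft_pos (θ t : ℝ) (hθ1 : -π ≤ θ) (hθ2 : θ < -π/2) (ht : |t| < π/2) :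
    0 < 2*(-π/2 - θ)*(π/2 + t) - 2*π*max (t - (θ + π)) 0 := by
  have hpi := Real.pi_pos
  rw [abs_lt] at ht
  rcases le_or_gt (t - (θ + π)) 0 with hc | hc
  · rw [max_eq_right hc]; nlinarith
  · rw [max_eq_left hc.le]; nlinarith


set_option maxHeartbeats 2000000 in
/-- a measure supported in a closed hemisphere, with positive mass in the
open hemisphere, admits a well-defined Fréchet mean, which lies in the open hemisphere. -/
theorem frechet_mean_of_hemisphere (μ : Measure S1) [IsProbabilityMeasure μ] (phat : S1)
    (h1 : μ {p : S1 | dS1 p phat ≤ π/2} = 1)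
    (h2 : 0 < μ {p : S1 | dS1 p phat < π/2}) :
    ∃ pstar : S1, (∀ q : S1, q ≠ pstar → frechet μ pstar < frechet μ q) ∧
      dS1 pstar phat < π/2 := by
  classical
  have hpi := Real.pi_pos
  set s : S1 → ℝ := invChart phat with hs_def
  have hmeas : Measurable s := measurable_invChart phat
  have hrange : ∀ x, -π ≤ s x ∧ s x < π :=
    fun x => ⟨(invChart_mem_Ico phat x).1, (invChart_mem_Ico phat x).2⟩
  have hd : ∀ x : S1, dS1 x phat = |s x| := fun x => dS1_eq_abs_invChart phat x
  -- a.e. bound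
  have hmeasset : MeasurableSet {x : S1 | |s x| ≤ π/2} :=
    measurableSet_le hmeas.abs measurable_const
  have hset1 : {p : S1 | dS1 p phat ≤ π/2} = {x : S1 | |s x| ≤ π/2} := by
    ext x; simp [hd x]
  have hset2 : {p : S1 | dS1 p phat < π/2} = {x : S1 | |s x| < π/2} := by
    ext x; simp [hd x]
  have hae : ∀ᵐ x ∂μ, |s x| ≤ π/2 := by
    rw [ae_iff]
    have hcompl : μ {x : S1 | |s x| ≤ π/2}ᶜ = 0 := by
      rw [measure_compl hmeasset (measure_ne_top μ _), ← hset1, h1, measure_univ]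
      simp
    convert hcompl using 2
    ext x; simp
  have hpos : 0 < μ {x : S1 | |s x| < π/2} := hset2 ▸ h2
  -- integrability
  have intgr : ∀ (f : ℝ → ℝ) (C : ℝ), Measurable f → (∀ t, -π ≤ t → t < π → |f t| ≤ C) →
      Integrable (fun x => f (s x)) μ := by
    intro f C hf hC
    refine (integrable_const C).mono' ((hf.comp hmeas).aestronglyMeasurable)
      (ae_of_all _ fun x => ?_)
    simpa [Real.norm_eq_abs] using hC (s x) (hrange x).1 (hrange x).2
  have int_s : Integrable s μ := by
    have := intgr (fun t => t) π measurable_id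
      (fun t h1 h2 => abs_le.2 ⟨by linarith, by linarith⟩)
    simpa using this
  have int_s2 : Integrable (fun x => (s x)^2) μ := by
    refine intgr (fun t => t^2) (π^2) (measurable_id.pow_const 2) (fun t h1 h2 => ?_)
    show |t^2| ≤ π^2
    rw [abs_le]; constructor <;> nlinarith [sq_nonneg t, hpi]
  -- mean
  set m : ℝ := ∫ x, s x ∂μ with hm_def
  -- |m| < π/2
  have habs_int : ∫ x, |s x| ∂μ < π/2 := by
    have hnn : 0 ≤ᵐ[μ] fun x => π/2 - |s x| := hae.mono fun x hx => by simp only [Pi.zero_apply]; linarith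
    have hint : Integrable (fun x => π/2 - |s x|) μ := (integrable_const _).sub int_s.abs
    have hsupp : {x : S1 | |s x| < π/2} ⊆ Function.support (fun x => π/2 - |s x|) := by
      intro x hx
      simp only [Set.mem_setOf_eq] at hx
      simp only [Function.mem_support]
      intro h
      linarith
    have hposint : 0 < ∫ x, (π/2 - |s x|) ∂μ :=
      (integral_pos_iff_support_of_nonneg_ae hnn hint).2
        (lt_of_lt_of_le hpos (measure_mono hsupp))
    have heq : ∫ x, (π/2 - |s x|) ∂μ = π/2 - ∫ x, |s x| ∂μ := by
      rw [integral_sub (integrable_const _) int_s.abs, integral_const]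
      simp [measure_univ]
    linarith [heq ▸ hposint]
  have hm : |m| < π/2 := by
    have h := norm_integral_le_integral_norm (μ := μ) (f := s)
    simp only [Real.norm_eq_abs] at h
    exact lt_of_le_of_lt h habs_int
  -- expansion of the quadratic integral
  have exp1 : ∀ θ : ℝ, ∫ x, (s x - θ)^2 ∂μ = (∫ x, (s x)^2 ∂μ) - 2*θ*m + θ^2 := by
    intro θ
    have h1 : (fun x => (s x - θ)^2) = fun x => ((s x)^2 - (2*θ)*(s x)) + θ^2 := by
      funext x; ring
    have hint1 : Integrable (fun x => (s x)^2 - (2*θ)*(s x)) μ :=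
      int_s2.sub (int_s.const_mul (2*θ))
    have hint2 : Integrable (fun x => (2*θ)*(s x)) μ := int_s.const_mul (2*θ)
    rw [h1, integral_add hint1 (integrable_const _),
      integral_sub int_s2 hint2, integral_const_mul, integral_const]
    simp [measure_univ, hm_def]
  -- Fréchet functional in the chart, central case
  have F1 : ∀ θ : ℝ, |θ| ≤ π/2 →
      frechet μ (chart phat θ) = 1/2 * ((∫ x, (s x)^2 ∂μ) - 2*θ*m + θ^2) := by
    intro θ hθ
    have hcong : ∫ x, (dS1 x (chart phat θ))^2 ∂μ = ∫ x, (s x - θ)^2 ∂μ := by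
      apply integral_congr_ae
      filter_upwards [hae] with x hx
      have h0 : chart phat (s x) = x := chart_invChart phat x
      calc (dS1 x (chart phat θ))^2 = (dS1 (chart phat (s x)) (chart phat θ))^2 := by rw [h0]
        _ = (s x - θ)^2 := sq_dS1_of_abs_le phat (s x) θ (by
            rw [abs_le] at hx hθ ⊢; constructor <;> [linarith; linarith])
    rw [show frechet μ (chart phat θ) = 1/2 * ∫ x, (dS1 x (chart phat θ))^2 ∂μ from rfl,
      hcong, exp1]
  refine ⟨chart phat m, ?_, ?_⟩
  swap
  · have hb : |m - 0| ≤ π := by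
      rw [sub_zero, abs_le]; rw [abs_lt] at hm; constructor <;> linarith
    have : dS1 (chart phat m) phat = |m| := by
      calc dS1 (chart phat m) phat = dS1 (chart phat m) (chart phat 0) := by rw [chart_zero]
        _ = |m - 0| := dS1_chart phat m 0 hb
        _ = |m| := by rw [sub_zero]
    rw [this]; exact hm
  -- main inequality
  have key : ∀ θ : ℝ, -π ≤ θ → θ < π → θ ≠ m →
      frechet μ (chart phat m) < frechet μ (chart phat θ) := by
    intro θ hθ1 hθ2 hne
    have Fm := F1 m hm.le
    rcases lt_or_ge (π/2) θ with hcase | hcase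
    · -- right case: π/2 < θ < π
      have hKint : Integrable (fun x => max (θ - π - s x) 0) μ := by
        refine intgr (fun t => max (θ - π - t) 0) (2*π)
          ((measurable_const.sub measurable_id).max measurable_const) (fun t ht1 ht2 => ?_)
        show |max (θ - π - t) 0| ≤ 2*π
        rw [abs_of_nonneg (le_max_right _ 0)]
        exact max_le (by linarith) (by linarith)
      have hcong : ∫ x, (dS1 x (chart phat θ))^2 ∂μ
          = ∫ x, ((s x - θ)^2 - 4*π*max (θ - π - s x) 0) ∂μ := by
        apply integral_congr_ae
        filter_upwards [hae] with x hx
        have h0 : chart phat (s x) = x := chart_invChart phat x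
        calc (dS1 x (chart phat θ))^2 = (dS1 (chart phat (s x)) (chart phat θ))^2 := by rw [h0]
          _ = _ := sq_dS1_right phat (s x) θ hx hcase hθ2
      have hint1 : Integrable (fun x => (s x - θ)^2) μ := by
        refine intgr (fun t => (t - θ)^2) ((2*π)^2)
          ((measurable_id.sub_const θ).pow_const 2) (fun t ht1 ht2 => ?_)
        show |(t - θ)^2| ≤ (2*π)^2
        rw [abs_le]; constructor <;> nlinarith
      have hsplit : ∫ x, ((s x - θ)^2 - 4*π*max (θ - π - s x) 0) ∂μ
          = ((∫ x, (s x)^2 ∂μ) - 2*θ*m + θ^2) - 4*π*(∫ x, max (θ - π - s x) 0 ∂μ) := by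
        have hint2 : Integrable (fun x => (4*π)*(max (θ - π - s x) 0)) μ := hKint.const_mul _
        rw [show (fun x => ((s x - θ)^2 - 4*π*max (θ - π - s x) 0))
            = fun x => ((s x - θ)^2 - (4*π)*(max (θ - π - s x) 0)) from rfl,
          integral_sub hint1 hint2, exp1 θ, integral_const_mul]
      have hPint : Integrable (fun x => 2*(θ - π/2)*(π/2 - s x) - 2*π*max (θ - π - s x) 0) μ := by
        have ha : Integrable (fun x => 2*(θ - π/2)*(π/2 - s x)) μ :=
          ((integrable_const (π/2)).sub int_s).const_mul _
        exact ha.sub (hKint.const_mul (2*π))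
      have hPnn : 0 ≤ᵐ[μ] fun x => 2*(θ - π/2)*(π/2 - s x) - 2*π*max (θ - π - s x) 0 :=
        hae.mono fun x hx => by
          simpa [Pi.zero_apply] using Pright_nonneg θ (s x) hcase hθ2.le hx
      have hPsupp : {x : S1 | |s x| < π/2} ⊆
          Function.support (fun x => 2*(θ - π/2)*(π/2 - s x) - 2*π*max (θ - π - s x) 0) := by
        intro x hx
        simp only [Set.mem_setOf_eq] at hx
        exact Function.mem_support.2 (Pright_pos θ (s x) hcase hθ2.le hx).ne'
      have hW : 0 < ∫ x, (2*(θ - π/2)*(π/2 - s x) - 2*π*max (θ - π - s x) 0) ∂μ :=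
        (integral_pos_iff_support_of_nonneg_ae hPnn hPint).2
          (lt_of_lt_of_le hpos (measure_mono hPsupp))
      have hWeq : ∫ x, (2*(θ - π/2)*(π/2 - s x) - 2*π*max (θ - π - s x) 0) ∂μ
          = 2*(θ - π/2)*(π/2 - m) - 2*π*(∫ x, max (θ - π - s x) 0 ∂μ) := by
        have hb1 : Integrable (fun x => 2*(θ - π/2)*(π/2 - s x)) μ :=
          ((integrable_const (π/2)).sub int_s).const_mul _
        have hb2 : Integrable (fun x => (2*π)*(max (θ - π - s x) 0)) μ := hKint.const_mul _
        have hc1 : Integrable (fun x => (π/2 : ℝ)) μ := integrable_const _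
        have hc2 : Integrable (fun x => (π/2 : ℝ) - s x) μ := hc1.sub int_s
        have hmean1 : ∫ x, 2*(θ - π/2)*(π/2 - s x) ∂μ = 2*(θ - π/2)*(π/2 - m) := by
          rw [integral_const_mul, integral_sub hc1 int_s, integral_const]
          simp [measure_univ, hm_def]
        rw [integral_sub hb1 hb2, hmean1, integral_const_mul]
      rw [hWeq] at hW
      have hFθ : frechet μ (chart phat θ)
          = 1/2 * (((∫ x, (s x)^2 ∂μ) - 2*θ*m + θ^2) - 4*π*(∫ x, max (θ - π - s x) 0 ∂μ)) := by
        rw [show frechet μ (chart phat θ) = 1/2 * ∫ x, (dS1 x (chart phat θ))^2 ∂μ from rfl,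
          hcong, hsplit]
      rw [Fm, hFθ]
      nlinarith [hW, sq_nonneg (θ + m - π)]
    · rcases lt_or_ge θ (-(π/2)) with hcase2 | hcase2
      · -- left case: -π ≤ θ < -π/2
        have hcase2' : θ < -π/2 := by linarith
        have hKint : Integrable (fun x => max (s x - (θ + π)) 0) μ := by
          refine intgr (fun t => max (t - (θ + π)) 0) (2*π)
            ((measurable_id.sub_const _).max measurable_const) (fun t ht1 ht2 => ?_)
          show |max (t - (θ + π)) 0| ≤ 2*π
          rw [abs_of_nonneg (le_max_right _ 0)]
          exact max_le (by linarith) (by linarith)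
        have hcong : ∫ x, (dS1 x (chart phat θ))^2 ∂μ
            = ∫ x, ((s x - θ)^2 - 4*π*max (s x - (θ + π)) 0) ∂μ := by
          apply integral_congr_ae
          filter_upwards [hae] with x hx
          have h0 : chart phat (s x) = x := chart_invChart phat x
          calc (dS1 x (chart phat θ))^2 = (dS1 (chart phat (s x)) (chart phat θ))^2 := by rw [h0]
            _ = _ := sq_dS1_left phat (s x) θ hx hθ1 hcase2'
        have hint1 : Integrable (fun x => (s x - θ)^2) μ := by
          refine intgr (fun t => (t - θ)^2) ((2*π)^2)
            ((measurable_id.sub_const θ).pow_const 2) (fun t ht1 ht2 => ?_)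
          show |(t - θ)^2| ≤ (2*π)^2
          rw [abs_le]; constructor <;> nlinarith
        have hsplit : ∫ x, ((s x - θ)^2 - 4*π*max (s x - (θ + π)) 0) ∂μ
            = ((∫ x, (s x)^2 ∂μ) - 2*θ*m + θ^2) - 4*π*(∫ x, max (s x - (θ + π)) 0 ∂μ) := by
          have hint2 : Integrable (fun x => (4*π)*(max (s x - (θ + π)) 0)) μ := hKint.const_mul _
          rw [show (fun x => ((s x - θ)^2 - 4*π*max (s x - (θ + π)) 0))
              = fun x => ((s x - θ)^2 - (4*π)*(max (s x - (θ + π)) 0)) from rfl,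
            integral_sub hint1 hint2, exp1 θ, integral_const_mul]
        have hPint : Integrable
            (fun x => 2*(-π/2 - θ)*(π/2 + s x) - 2*π*max (s x - (θ + π)) 0) μ := by
          have ha : Integrable (fun x => 2*(-π/2 - θ)*(π/2 + s x)) μ :=
            ((integrable_const (π/2)).add int_s).const_mul _
          exact ha.sub (hKint.const_mul (2*π))
        have hPnn : 0 ≤ᵐ[μ] fun x => 2*(-π/2 - θ)*(π/2 + s x) - 2*π*max (s x - (θ + π)) 0 :=
          hae.mono fun x hx => by
            simpa [Pi.zero_apply] using Pleft_nonneg θ (s x) hθ1 hcase2' hx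
        have hPsupp : {x : S1 | |s x| < π/2} ⊆
            Function.support (fun x => 2*(-π/2 - θ)*(π/2 + s x) - 2*π*max (s x - (θ + π)) 0) := by
          intro x hx
          simp only [Set.mem_setOf_eq] at hx
          exact Function.mem_support.2 (Pleft_pos θ (s x) hθ1 hcase2' hx).ne'
        have hW : 0 < ∫ x, (2*(-π/2 - θ)*(π/2 + s x) - 2*π*max (s x - (θ + π)) 0) ∂μ :=
          (integral_pos_iff_support_of_nonneg_ae hPnn hPint).2
            (lt_of_lt_of_le hpos (measure_mono hPsupp))
        have hWeq : ∫ x, (2*(-π/2 - θ)*(π/2 + s x) - 2*π*max (s x - (θ + π)) 0) ∂μ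
            = 2*(-π/2 - θ)*(π/2 + m) - 2*π*(∫ x, max (s x - (θ + π)) 0 ∂μ) := by
          have hb1 : Integrable (fun x => 2*(-π/2 - θ)*(π/2 + s x)) μ :=
            ((integrable_const (π/2)).add int_s).const_mul _
          have hb2 : Integrable (fun x => (2*π)*(max (s x - (θ + π)) 0)) μ := hKint.const_mul _
          have hc1 : Integrable (fun x => (π/2 : ℝ)) μ := integrable_const _
          have hmean1 : ∫ x, 2*(-π/2 - θ)*(π/2 + s x) ∂μ = 2*(-π/2 - θ)*(π/2 + m) := by
            rw [integral_const_mul, integral_add hc1 int_s, integral_const]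
            simp [measure_univ, hm_def]
          rw [integral_sub hb1 hb2, hmean1, integral_const_mul]
        rw [hWeq] at hW
        have hFθ : frechet μ (chart phat θ)
            = 1/2 * (((∫ x, (s x)^2 ∂μ) - 2*θ*m + θ^2)
                - 4*π*(∫ x, max (s x - (θ + π)) 0 ∂μ)) := by
          rw [show frechet μ (chart phat θ) = 1/2 * ∫ x, (dS1 x (chart phat θ))^2 ∂μ from rfl,
            hcong, hsplit]
        rw [Fm, hFθ]
        nlinarith [hW, sq_nonneg (θ + m + π)]
      · -- central case
        have Fθ := F1 θ (abs_le.2 ⟨by linarith, hcase⟩)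
        rw [Fm, Fθ]
        have h5 : θ - m ≠ 0 := sub_ne_zero.2 hne
        have h6 : 0 < (θ - m)^2 := by positivity
        nlinarith [h6]
  intro q hq
  have hq' : chart phat (invChart phat q) = q := chart_invChart phat q
  have hmem := invChart_mem_Ico phat q
  have hne : invChart phat q ≠ m := by
    intro h
    apply hq
    rw [← hq', h]
  have := key (invChart phat q) hmem.1 hmem.2 hne
  rwa [hq'] at this
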